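/- The Milnor number of the polynomial F(x,y) = x⁵ + y⁵ + x²y² equals 16, i.e. dim_C(C[x,y]/(∂F/∂x, ∂F/∂y)) = 16. -/

import Mathlib

open MvPolynomial Matrix

noncomputable section MilnorAux

def AuZ : Matrix (Fin 16) (Fin 16) ℤ :=
  !![0,0,0,0,0,0,0,0,0,0,0,0,0,0,0,0;
     0,0,0,0,0,0,0,0,0,0,0,0,0,0,0,0;
     0,0,0,0,0,0,0,0,0,0,0,0,0,0,0,0;
     0,0,0,0,0,0,0,0,0,0,0,0,0,0,0,0;
     0,0,0,0,0,0,0,0,0,0,0,0,-1,0,0,0;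
     0,0,0,0,0,0,0,0,0,0,0,0,0,-1,0,0;
     0,0,0,0,0,0,0,1,0,0,0,0,0,0,0,0;
     0,0,0,-1,0,0,0,0,1,0,0,0,0,0,0,0;
     0,0,0,0,-1,0,0,0,0,1,0,0,0,0,0,0;
     0,0,0,0,0,-1,0,0,0,0,1,0,0,0,0,0;
     0,0,0,0,0,0,-1,0,0,0,0,0,0,0,0,0;
     1,0,0,0,0,0,0,0,0,0,0,0,0,0,0,0;
     0,1,0,0,0,0,0,0,0,0,0,0,0,0,0,0;
     0,0,1,0,0,0,0,0,0,0,0,0,0,0,0,-1;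
     0,0,0,0,0,0,0,0,0,0,0,1,0,0,0,0;
     0,0,0,0,0,0,0,0,0,0,0,0,0,0,1,0]

def AvZ : Matrix (Fin 16) (Fin 16) ℤ :=
  !![0,0,0,0,0,0,0,0,0,0,0,0,0,0,0,0;
     1,0,0,0,0,0,0,0,0,0,0,0,0,0,0,0;
     0,1,0,0,0,0,0,0,0,0,0,0,0,0,0,0;
     0,0,1,0,0,0,0,0,0,0,0,0,0,0,0,0;
     0,0,0,1,0,0,0,0,0,0,0,0,0,0,-1,0;
     0,0,0,0,1,0,0,0,0,0,0,0,0,0,0,0;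
     0,0,0,0,0,1,0,0,0,0,-1,0,0,0,0,0;
     0,0,0,0,0,0,1,0,0,0,0,0,0,-1,0,0;
     0,0,0,0,0,0,0,1,0,0,0,0,0,0,0,1;
     0,0,0,0,0,0,0,0,1,0,0,0,0,0,0,0;
     0,0,0,0,0,0,0,0,0,1,0,0,0,0,0,0;
     0,0,0,0,0,0,0,0,0,0,0,0,0,0,0,0;
     0,0,0,0,0,0,0,0,0,0,0,1,0,0,0,0;
     0,0,0,0,0,0,0,0,0,0,0,0,1,0,0,0;
     0,0,0,0,0,0,0,0,0,0,0,0,0,0,0,0;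
     0,0,0,0,0,0,0,0,0,0,0,0,0,0,0,0]

def Au2Z : Matrix (Fin 16) (Fin 16) ℤ :=
  !![0,0,0,0,0,0,0,0,0,0,0,0,0,0,0,0;
     0,0,0,0,0,0,0,0,0,0,0,0,0,0,0,0;
     0,0,0,0,0,0,0,0,0,0,0,0,0,0,0,0;
     0,0,0,0,0,0,0,0,0,0,0,0,0,0,0,0;
     0,-1,0,0,0,0,0,0,0,0,0,0,0,0,0,0;
     0,0,-1,0,0,0,0,0,0,0,0,0,0,0,0,1;
     0,0,0,-1,0,0,0,0,1,0,0,0,0,0,0,0;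
     0,0,0,0,-1,0,0,0,0,1,0,0,0,0,0,0;
     0,0,0,0,0,-1,0,0,0,0,1,0,1,0,0,0;
     0,0,0,0,0,0,-1,0,0,0,0,0,0,1,0,0;
     0,0,0,0,0,0,0,-1,0,0,0,0,0,0,0,0;
     0,0,0,0,0,0,0,0,0,0,0,0,0,0,0,0;
     0,0,0,0,0,0,0,0,0,0,0,0,0,0,0,0;
     0,0,0,0,0,0,0,0,0,0,0,0,0,0,-1,0;
     1,0,0,0,0,0,0,0,0,0,0,0,0,0,0,0;
     0,0,0,0,0,0,0,0,0,0,0,1,0,0,0,0]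

def Av2Z : Matrix (Fin 16) (Fin 16) ℤ :=
  !![0,0,0,0,0,0,0,0,0,0,0,0,0,0,0,0;
     0,0,0,0,0,0,0,0,0,0,0,0,0,0,0,0;
     1,0,0,0,0,0,0,0,0,0,0,0,0,0,0,0;
     0,1,0,0,0,0,0,0,0,0,0,0,0,0,0,0;
     0,0,1,0,0,0,0,0,0,0,0,0,0,0,0,0;
     0,0,0,1,0,0,0,0,0,0,0,0,0,0,-1,0;
     0,0,0,0,1,0,0,0,0,-1,0,0,0,0,0,0;
     0,0,0,0,0,1,0,0,0,0,-1,0,-1,0,0,0;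
     0,0,0,0,0,0,1,0,0,0,0,0,0,-1,0,0;
     0,0,0,0,0,0,0,1,0,0,0,0,0,0,0,1;
     0,0,0,0,0,0,0,0,1,0,0,0,0,0,0,0;
     0,0,0,0,0,0,0,0,0,0,0,0,0,0,0,0;
     0,0,0,0,0,0,0,0,0,0,0,0,0,0,0,0;
     0,0,0,0,0,0,0,0,0,0,0,1,0,0,0,0;
     0,0,0,0,0,0,0,0,0,0,0,0,0,0,0,0;
     0,0,0,0,0,0,0,0,0,0,0,0,0,0,0,0]

def Au4Z : Matrix (Fin 16) (Fin 16) ℤ :=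
  !![0,0,0,0,0,0,0,0,0,0,0,0,0,0,0,0;
     0,0,0,0,0,0,0,0,0,0,0,0,0,0,0,0;
     0,0,0,0,0,0,0,0,0,0,0,0,0,0,0,0;
     0,0,0,0,0,0,0,0,0,0,0,0,0,0,0,0;
     0,0,0,0,0,0,0,0,0,0,0,0,0,0,0,0;
     0,0,0,0,0,0,0,0,0,0,0,1,0,0,0,0;
     0,0,0,0,0,-1,0,0,0,0,1,0,1,0,0,0;
     0,1,0,0,0,0,-1,0,0,0,0,0,0,1,0,0;
     0,0,1,0,0,0,0,-1,0,0,0,0,0,0,0,-1;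
     0,0,0,1,0,0,0,0,-1,0,0,0,0,0,-1,0;
     0,0,0,0,1,0,0,0,0,-1,0,0,0,0,0,0;
     0,0,0,0,0,0,0,0,0,0,0,0,0,0,0,0;
     0,0,0,0,0,0,0,0,0,0,0,0,0,0,0,0;
     -1,0,0,0,0,0,0,0,0,0,0,0,0,0,0,0;
     0,0,0,0,0,0,0,0,0,0,0,0,0,0,0,0;
     0,0,0,0,0,0,0,0,0,0,0,0,0,0,0,0]

def AuAv2Z : Matrix (Fin 16) (Fin 16) ℤ :=
  !![0,0,0,0,0,0,0,0,0,0,0,0,0,0,0,0;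
     0,0,0,0,0,0,0,0,0,0,0,0,0,0,0,0;
     0,0,0,0,0,0,0,0,0,0,0,0,0,0,0,0;
     0,0,0,0,0,0,0,0,0,0,0,0,0,0,0,0;
     0,0,0,0,0,0,0,0,0,0,0,0,0,0,0,0;
     0,0,0,0,0,0,0,0,0,0,0,-1,0,0,0,0;
     0,0,0,0,0,1,0,0,0,0,-1,0,-1,0,0,0;
     0,-1,0,0,0,0,1,0,0,0,0,0,0,-1,0,0;
     0,0,-1,0,0,0,0,1,0,0,0,0,0,0,0,1;
     0,0,0,-1,0,0,0,0,1,0,0,0,0,0,1,0;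
     0,0,0,0,-1,0,0,0,0,1,0,0,0,0,0,0;
     0,0,0,0,0,0,0,0,0,0,0,0,0,0,0,0;
     0,0,0,0,0,0,0,0,0,0,0,0,0,0,0,0;
     1,0,0,0,0,0,0,0,0,0,0,0,0,0,0,0;
     0,0,0,0,0,0,0,0,0,0,0,0,0,0,0,0;
     0,0,0,0,0,0,0,0,0,0,0,0,0,0,0,0]

def Au2AvZ : Matrix (Fin 16) (Fin 16) ℤ :=
  !![0,0,0,0,0,0,0,0,0,0,0,0,0,0,0,0;
     0,0,0,0,0,0,0,0,0,0,0,0,0,0,0,0;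
     0,0,0,0,0,0,0,0,0,0,0,0,0,0,0,0;
     0,0,0,0,0,0,0,0,0,0,0,0,0,0,0,0;
     -1,0,0,0,0,0,0,0,0,0,0,0,0,0,0,0;
     0,-1,0,0,0,0,0,0,0,0,0,0,0,0,0,0;
     0,0,-1,0,0,0,0,1,0,0,0,0,0,0,0,1;
     0,0,0,-1,0,0,0,0,1,0,0,0,0,0,1,0;
     0,0,0,0,-1,0,0,0,0,1,0,1,0,0,0,0;
     0,0,0,0,0,-1,0,0,0,0,1,0,1,0,0,0;
     0,0,0,0,0,0,-1,0,0,0,0,0,0,1,0,0;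
     0,0,0,0,0,0,0,0,0,0,0,0,0,0,0,0;
     0,0,0,0,0,0,0,0,0,0,0,0,0,0,0,0;
     0,0,0,0,0,0,0,0,0,0,0,0,0,0,0,0;
     0,0,0,0,0,0,0,0,0,0,0,0,0,0,0,0;
     0,0,0,0,0,0,0,0,0,0,0,0,0,0,0,0]

set_option maxRecDepth 100000

lemma mz_e1 : AuZ * AuZ = Au2Z := by decide
lemma mz_e2 : AvZ * AvZ = Av2Z := by decide
lemma mz_e3 : Au2Z * Au2Z = Au4Z := by decide
lemma mz_e4 : AuZ * Av2Z = AuAv2Z := by decide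
lemma mz_e5 : Au2Z * AvZ = Au2AvZ := by decide
lemma mz_e6 : Au4Z + AuAv2Z = 0 := by decide
lemma mz_e7 : Av2Z * Av2Z + Au2AvZ = 0 := by decide
lemma mz_comm : AuZ * AvZ = AvZ * AuZ := by decide

lemma hfZ : AuZ ^ 4 + AuZ * AvZ ^ 2 = 0 := by
  rw [show AuZ ^ 4 = (AuZ * AuZ) * (AuZ * AuZ) by
        rw [pow_succ, pow_succ, pow_succ, pow_one, mul_assoc],
      show AvZ ^ 2 = AvZ * AvZ from sq AvZ, mz_e1, mz_e2, mz_e3, mz_e4, mz_e6]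

lemma hgZ : AvZ ^ 4 + AuZ ^ 2 * AvZ = 0 := by
  rw [show AvZ ^ 4 = (AvZ * AvZ) * (AvZ * AvZ) by
        rw [pow_succ, pow_succ, pow_succ, pow_one, mul_assoc],
      show AuZ ^ 2 = AuZ * AuZ from sq AuZ, mz_e1, mz_e2, mz_e5, mz_e7]

def AuC : Matrix (Fin 16) (Fin 16) ℂ := AuZ.map (Int.castRingHom ℂ)
def AvC : Matrix (Fin 16) (Fin 16) ℂ := AvZ.map (Int.castRingHom ℂ)

lemma hcommC : AuC * AvC = AvC * AuC := by
  have h := congrArg ((Int.castRingHom ℂ).mapMatrix) mz_comm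
  simp only [_root_.map_mul, RingHom.mapMatrix_apply] at h
  exact h

lemma hfC : AuC ^ 4 + AuC * AvC ^ 2 = 0 := by
  have h := congrArg ((Int.castRingHom ℂ).mapMatrix) hfZ
  simp only [_root_.map_add, _root_.map_mul, _root_.map_pow, _root_.map_zero,
    RingHom.mapMatrix_apply] at h
  exact h

lemma hgC : AvC ^ 4 + AuC ^ 2 * AvC = 0 := by
  have h := congrArg ((Int.castRingHom ℂ).mapMatrix) hgZ
  simp only [_root_.map_add, _root_.map_mul, _root_.map_pow, _root_.map_zero,
    RingHom.mapMatrix_apply] at h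
  exact h

lemma castSingle (k : Fin 16) :
    ⇑(Int.castRingHom ℂ) ∘ (Pi.single k (1 : ℤ)) = Pi.single k (1 : ℂ) := by
  funext i
  by_cases h : i = k <;> simp [h, Pi.single_apply]

lemma castStep {M : Matrix (Fin 16) (Fin 16) ℤ} {k k' : Fin 16}
    (h : M *ᵥ Pi.single k 1 = Pi.single k' 1) :
    (M.map (Int.castRingHom ℂ)) *ᵥ Pi.single k (1 : ℂ) = Pi.single k' (1 : ℂ) := by
  funext i
  calc (M.map (Int.castRingHom ℂ) *ᵥ Pi.single k (1 : ℂ)) i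
      = (M.map (Int.castRingHom ℂ) *ᵥ (⇑(Int.castRingHom ℂ) ∘ Pi.single k (1 : ℤ))) i := by
        rw [castSingle]
    _ = (Int.castRingHom ℂ) ((M *ᵥ Pi.single k (1 : ℤ)) i) :=
        (RingHom.map_mulVec (Int.castRingHom ℂ) M _ i).symm
    _ = Pi.single (M := fun _ => ℂ) k' 1 i := by rw [h]; exact congrFun (castSingle k') i

lemma su0 : AuC *ᵥ Pi.single 0 1 = Pi.single 11 1 := castStep (by decide)
lemma su1 : AuC *ᵥ Pi.single 1 1 = Pi.single 12 1 := castStep (by decide)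
lemma su2 : AuC *ᵥ Pi.single 2 1 = Pi.single 13 1 := castStep (by decide)
lemma su11 : AuC *ᵥ Pi.single 11 1 = Pi.single 14 1 := castStep (by decide)
lemma su14 : AuC *ᵥ Pi.single 14 1 = Pi.single 15 1 := castStep (by decide)
lemma sv0 : AvC *ᵥ Pi.single 0 1 = Pi.single 1 1 := castStep (by decide)
lemma sv1 : AvC *ᵥ Pi.single 1 1 = Pi.single 2 1 := castStep (by decide)
lemma sv2 : AvC *ᵥ Pi.single 2 1 = Pi.single 3 1 := castStep (by decide)
lemma sv3 : AvC *ᵥ Pi.single 3 1 = Pi.single 4 1 := castStep (by decide)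
lemma sv4 : AvC *ᵥ Pi.single 4 1 = Pi.single 5 1 := castStep (by decide)
lemma sv5 : AvC *ᵥ Pi.single 5 1 = Pi.single 6 1 := castStep (by decide)
lemma sv6 : AvC *ᵥ Pi.single 6 1 = Pi.single 7 1 := castStep (by decide)
lemma sv7 : AvC *ᵥ Pi.single 7 1 = Pi.single 8 1 := castStep (by decide)
lemma sv8 : AvC *ᵥ Pi.single 8 1 = Pi.single 9 1 := castStep (by decide)
lemma sv9 : AvC *ᵥ Pi.single 9 1 = Pi.single 10 1 := castStep (by decide)

noncomputable section

abbrev MvP := MvPolynomial (Fin 2) ℂ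

def fP : MvP := C 5 * X 0 ^ 4 + C 2 * (X 0 * X 1 ^ 2)
def gP : MvP := C 5 * X 1 ^ 4 + C 2 * (X 0 ^ 2 * X 1)

def JId : Ideal MvP := Ideal.span {fP, gP}

def SJ : Subalgebra ℂ (Matrix (Fin 16) (Fin 16) ℂ) := Algebra.adjoin ℂ {AuC, AvC}

open scoped IsMulCommutative

instance : IsMulCommutative SJ :=
  Algebra.isMulCommutative_adjoin ℂ (by
    rintro a (rfl | rfl) b (rfl | rfl) <;> first | rfl | exact hcommC | exact hcommC.symm)

def Umat : SJ := ⟨AuC, Algebra.subset_adjoin (by simp)⟩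
def Wmat : SJ := ⟨AvC, Algebra.subset_adjoin (by simp)⟩

def phi : MvP →ₐ[ℂ] SJ := aeval ![(2/5 : ℂ) • Umat, (2/5 : ℂ) • Wmat]

def Phi : MvP →ₐ[ℂ] Matrix (Fin 16) (Fin 16) ℂ := SJ.val.comp phi

lemma Phi_X0 : Phi (X 0) = (2/5 : ℂ) • AuC := by
  simp [Phi, phi]
  rfl

lemma Phi_X1 : Phi (X 1) = (2/5 : ℂ) • AvC := by
  simp [Phi, phi]
  rfl

lemma Phi_C (a : ℂ) : Phi (C a) = algebraMap ℂ (Matrix (Fin 16) (Fin 16) ℂ) a := by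
  simp [Phi, phi]

lemma Phi_f : Phi fP = 0 := by
  simp only [fP, _root_.map_add, _root_.map_mul, _root_.map_pow, Phi_X0, Phi_X1, Phi_C]
  simp only [← Algebra.smul_def, smul_pow, smul_mul_assoc, mul_smul_comm, smul_smul]
  norm_num
  rw [← smul_add, hfC, smul_zero]

lemma Phi_g : Phi gP = 0 := by
  simp only [gP, _root_.map_add, _root_.map_mul, _root_.map_pow, Phi_X0, Phi_X1, Phi_C]
  simp only [← Algebra.smul_def, smul_pow, smul_mul_assoc, mul_smul_comm, smul_smul]
  norm_num
  rw [← smul_add, hgC, smul_zero]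

def Lmap : MvP →ₗ[ℂ] (Fin 16 → ℂ) where
  toFun p := Phi p *ᵥ Pi.single 0 1
  map_add' p q := by
    simp only [_root_.map_add]
    exact Matrix.add_mulVec _ _ _
  map_smul' c p := by
    simp only [_root_.map_smul, RingHom.id_apply]
    exact Matrix.smul_mulVec _ _ _

lemma Lmap_ker {p : MvP} (hp : p ∈ JId) : Lmap p = 0 := by
  obtain ⟨a, b, rfl⟩ := Ideal.mem_span_pair.mp hp
  have h : Phi (a * fP + b * gP) = 0 := by
    rw [_root_.map_add, _root_.map_mul, _root_.map_mul, Phi_f, Phi_g, mul_zero, mul_zero,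
      add_zero]
  show Phi _ *ᵥ Pi.single 0 1 = 0
  rw [h, Matrix.zero_mulVec]

lemma Lmap_mono (i j : ℕ) :
    Lmap (X 0 ^ i * X 1 ^ j) =
      ((2/5 : ℂ) ^ (i + j)) • ((AuC ^ i * AvC ^ j) *ᵥ Pi.single 0 1) := by
  have h : Phi (X 0 ^ i * X 1 ^ j) = ((2/5 : ℂ) ^ (i + j)) • (AuC ^ i * AvC ^ j) := by
    rw [_root_.map_mul, _root_.map_pow, _root_.map_pow, Phi_X0, Phi_X1, smul_pow, smul_pow,
      smul_mul_assoc, mul_smul_comm, smul_smul, ← pow_add]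
  show Phi (X 0 ^ i * X 1 ^ j) *ᵥ Pi.single 0 1 = _
  rw [h, Matrix.smul_mulVec]
def pol : Fin 16 → MvP :=
  ![X 0 ^ 0 * X 1 ^ 0, X 0 ^ 0 * X 1 ^ 1, X 0 ^ 0 * X 1 ^ 2, X 0 ^ 0 * X 1 ^ 3, X 0 ^ 0 * X 1 ^ 4, X 0 ^ 0 * X 1 ^ 5, X 0 ^ 0 * X 1 ^ 6, X 0 ^ 0 * X 1 ^ 7, X 0 ^ 0 * X 1 ^ 8, X 0 ^ 0 * X 1 ^ 9, X 0 ^ 0 * X 1 ^ 10, X 0 ^ 1 * X 1 ^ 0, X 0 ^ 1 * X 1 ^ 1, X 0 ^ 1 * X 1 ^ 2, X 0 ^ 2 * X 1 ^ 0, X 0 ^ 3 * X 1 ^ 0]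

lemma polE0 : pol 0 = X 0 ^ 0 * X 1 ^ 0 := rfl
lemma polE1 : pol 1 = X 0 ^ 0 * X 1 ^ 1 := rfl
lemma polE2 : pol 2 = X 0 ^ 0 * X 1 ^ 2 := rfl
lemma polE3 : pol 3 = X 0 ^ 0 * X 1 ^ 3 := rfl
lemma polE4 : pol 4 = X 0 ^ 0 * X 1 ^ 4 := rfl
lemma polE5 : pol 5 = X 0 ^ 0 * X 1 ^ 5 := rfl
lemma polE6 : pol 6 = X 0 ^ 0 * X 1 ^ 6 := rfl
lemma polE7 : pol 7 = X 0 ^ 0 * X 1 ^ 7 := rfl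
lemma polE8 : pol 8 = X 0 ^ 0 * X 1 ^ 8 := rfl
lemma polE9 : pol 9 = X 0 ^ 0 * X 1 ^ 9 := rfl
lemma polE10 : pol 10 = X 0 ^ 0 * X 1 ^ 10 := rfl
lemma polE11 : pol 11 = X 0 ^ 1 * X 1 ^ 0 := rfl
lemma polE12 : pol 12 = X 0 ^ 1 * X 1 ^ 1 := rfl
lemma polE13 : pol 13 = X 0 ^ 1 * X 1 ^ 2 := rfl
lemma polE14 : pol 14 = X 0 ^ 2 * X 1 ^ 0 := rfl
lemma polE15 : pol 15 = X 0 ^ 3 * X 1 ^ 0 := rfl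

lemma tv0 : AvC ^ 0 *ᵥ Pi.single 0 1 = Pi.single 0 1 := by rw [pow_zero, Matrix.one_mulVec]
lemma tv1 : AvC ^ 1 *ᵥ Pi.single 0 1 = Pi.single 1 1 := by
  rw [pow_succ', ← Matrix.mulVec_mulVec, tv0, sv0]
lemma tv2 : AvC ^ 2 *ᵥ Pi.single 0 1 = Pi.single 2 1 := by
  rw [pow_succ', ← Matrix.mulVec_mulVec, tv1, sv1]
lemma tv3 : AvC ^ 3 *ᵥ Pi.single 0 1 = Pi.single 3 1 := by
  rw [pow_succ', ← Matrix.mulVec_mulVec, tv2, sv2]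
lemma tv4 : AvC ^ 4 *ᵥ Pi.single 0 1 = Pi.single 4 1 := by
  rw [pow_succ', ← Matrix.mulVec_mulVec, tv3, sv3]
lemma tv5 : AvC ^ 5 *ᵥ Pi.single 0 1 = Pi.single 5 1 := by
  rw [pow_succ', ← Matrix.mulVec_mulVec, tv4, sv4]
lemma tv6 : AvC ^ 6 *ᵥ Pi.single 0 1 = Pi.single 6 1 := by
  rw [pow_succ', ← Matrix.mulVec_mulVec, tv5, sv5]
lemma tv7 : AvC ^ 7 *ᵥ Pi.single 0 1 = Pi.single 7 1 := by
  rw [pow_succ', ← Matrix.mulVec_mulVec, tv6, sv6]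
lemma tv8 : AvC ^ 8 *ᵥ Pi.single 0 1 = Pi.single 8 1 := by
  rw [pow_succ', ← Matrix.mulVec_mulVec, tv7, sv7]
lemma tv9 : AvC ^ 9 *ᵥ Pi.single 0 1 = Pi.single 9 1 := by
  rw [pow_succ', ← Matrix.mulVec_mulVec, tv8, sv8]
lemma tv10 : AvC ^ 10 *ᵥ Pi.single 0 1 = Pi.single 10 1 := by
  rw [pow_succ', ← Matrix.mulVec_mulVec, tv9, sv9]

lemma ch0 : (AuC ^ 0 * AvC ^ 0) *ᵥ Pi.single 0 1 = Pi.single 0 1 := by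
  rw [pow_zero, one_mul, tv0]
lemma ch1 : (AuC ^ 0 * AvC ^ 1) *ᵥ Pi.single 0 1 = Pi.single 1 1 := by
  rw [pow_zero, one_mul, tv1]
lemma ch2 : (AuC ^ 0 * AvC ^ 2) *ᵥ Pi.single 0 1 = Pi.single 2 1 := by
  rw [pow_zero, one_mul, tv2]
lemma ch3 : (AuC ^ 0 * AvC ^ 3) *ᵥ Pi.single 0 1 = Pi.single 3 1 := by
  rw [pow_zero, one_mul, tv3]
lemma ch4 : (AuC ^ 0 * AvC ^ 4) *ᵥ Pi.single 0 1 = Pi.single 4 1 := by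
  rw [pow_zero, one_mul, tv4]
lemma ch5 : (AuC ^ 0 * AvC ^ 5) *ᵥ Pi.single 0 1 = Pi.single 5 1 := by
  rw [pow_zero, one_mul, tv5]
lemma ch6 : (AuC ^ 0 * AvC ^ 6) *ᵥ Pi.single 0 1 = Pi.single 6 1 := by
  rw [pow_zero, one_mul, tv6]
lemma ch7 : (AuC ^ 0 * AvC ^ 7) *ᵥ Pi.single 0 1 = Pi.single 7 1 := by
  rw [pow_zero, one_mul, tv7]
lemma ch8 : (AuC ^ 0 * AvC ^ 8) *ᵥ Pi.single 0 1 = Pi.single 8 1 := by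
  rw [pow_zero, one_mul, tv8]
lemma ch9 : (AuC ^ 0 * AvC ^ 9) *ᵥ Pi.single 0 1 = Pi.single 9 1 := by
  rw [pow_zero, one_mul, tv9]
lemma ch10 : (AuC ^ 0 * AvC ^ 10) *ᵥ Pi.single 0 1 = Pi.single 10 1 := by
  rw [pow_zero, one_mul, tv10]
lemma ch11 : (AuC ^ 1 * AvC ^ 0) *ᵥ Pi.single 0 1 = Pi.single 11 1 := by
  rw [pow_one, pow_zero, mul_one, su0]
lemma ch12 : (AuC ^ 1 * AvC ^ 1) *ᵥ Pi.single 0 1 = Pi.single 12 1 := by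
  rw [pow_one, pow_one, ← Matrix.mulVec_mulVec, sv0, su1]
lemma ch13 : (AuC ^ 1 * AvC ^ 2) *ᵥ Pi.single 0 1 = Pi.single 13 1 := by
  rw [pow_one, ← Matrix.mulVec_mulVec, tv2, su2]
lemma ch14 : (AuC ^ 2 * AvC ^ 0) *ᵥ Pi.single 0 1 = Pi.single 14 1 := by
  rw [pow_zero, mul_one, sq, ← Matrix.mulVec_mulVec, su0, su11]
lemma ch15 : (AuC ^ 3 * AvC ^ 0) *ᵥ Pi.single 0 1 = Pi.single 15 1 := by
  rw [pow_zero, mul_one, show AuC ^ 3 = AuC * AuC * AuC by rw [pow_succ, sq],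
    ← Matrix.mulVec_mulVec, ← Matrix.mulVec_mulVec, su0, su11, su14]

lemma hw0 : Lmap (pol 0) = ((2/5 : ℂ) ^ (0 + 0)) • (Pi.single 0 1 : Fin 16 → ℂ) := by
  rw [polE0, Lmap_mono, ch0]
lemma hw1 : Lmap (pol 1) = ((2/5 : ℂ) ^ (0 + 1)) • (Pi.single 1 1 : Fin 16 → ℂ) := by
  rw [polE1, Lmap_mono, ch1]
lemma hw2 : Lmap (pol 2) = ((2/5 : ℂ) ^ (0 + 2)) • (Pi.single 2 1 : Fin 16 → ℂ) := by
  rw [polE2, Lmap_mono, ch2]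
lemma hw3 : Lmap (pol 3) = ((2/5 : ℂ) ^ (0 + 3)) • (Pi.single 3 1 : Fin 16 → ℂ) := by
  rw [polE3, Lmap_mono, ch3]
lemma hw4 : Lmap (pol 4) = ((2/5 : ℂ) ^ (0 + 4)) • (Pi.single 4 1 : Fin 16 → ℂ) := by
  rw [polE4, Lmap_mono, ch4]
lemma hw5 : Lmap (pol 5) = ((2/5 : ℂ) ^ (0 + 5)) • (Pi.single 5 1 : Fin 16 → ℂ) := by
  rw [polE5, Lmap_mono, ch5]
lemma hw6 : Lmap (pol 6) = ((2/5 : ℂ) ^ (0 + 6)) • (Pi.single 6 1 : Fin 16 → ℂ) := by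
  rw [polE6, Lmap_mono, ch6]
lemma hw7 : Lmap (pol 7) = ((2/5 : ℂ) ^ (0 + 7)) • (Pi.single 7 1 : Fin 16 → ℂ) := by
  rw [polE7, Lmap_mono, ch7]
lemma hw8 : Lmap (pol 8) = ((2/5 : ℂ) ^ (0 + 8)) • (Pi.single 8 1 : Fin 16 → ℂ) := by
  rw [polE8, Lmap_mono, ch8]
lemma hw9 : Lmap (pol 9) = ((2/5 : ℂ) ^ (0 + 9)) • (Pi.single 9 1 : Fin 16 → ℂ) := by
  rw [polE9, Lmap_mono, ch9]
lemma hw10 : Lmap (pol 10) = ((2/5 : ℂ) ^ (0 + 10)) • (Pi.single 10 1 : Fin 16 → ℂ) := by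
  rw [polE10, Lmap_mono, ch10]
lemma hw11 : Lmap (pol 11) = ((2/5 : ℂ) ^ (1 + 0)) • (Pi.single 11 1 : Fin 16 → ℂ) := by
  rw [polE11, Lmap_mono, ch11]
lemma hw12 : Lmap (pol 12) = ((2/5 : ℂ) ^ (1 + 1)) • (Pi.single 12 1 : Fin 16 → ℂ) := by
  rw [polE12, Lmap_mono, ch12]
lemma hw13 : Lmap (pol 13) = ((2/5 : ℂ) ^ (1 + 2)) • (Pi.single 13 1 : Fin 16 → ℂ) := by
  rw [polE13, Lmap_mono, ch13]
lemma hw14 : Lmap (pol 14) = ((2/5 : ℂ) ^ (2 + 0)) • (Pi.single 14 1 : Fin 16 → ℂ) := by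
  rw [polE14, Lmap_mono, ch14]
lemma hw15 : Lmap (pol 15) = ((2/5 : ℂ) ^ (3 + 0)) • (Pi.single 15 1 : Fin 16 → ℂ) := by
  rw [polE15, Lmap_mono, ch15]

lemma hw' : ∀ k : Fin 16, ∃ c : ℂ, c ≠ 0 ∧ Lmap (pol k) = c • (Pi.single k 1 : Fin 16 → ℂ) := by
  intro k
  fin_cases k
  exacts [⟨_, pow_ne_zero _ (by norm_num), hw0⟩, ⟨_, pow_ne_zero _ (by norm_num), hw1⟩, ⟨_, pow_ne_zero _ (by norm_num), hw2⟩, ⟨_, pow_ne_zero _ (by norm_num), hw3⟩, ⟨_, pow_ne_zero _ (by norm_num), hw4⟩, ⟨_, pow_ne_zero _ (by norm_num), hw5⟩, ⟨_, pow_ne_zero _ (by norm_num), hw6⟩, ⟨_, pow_ne_zero _ (by norm_num), hw7⟩, ⟨_, pow_ne_zero _ (by norm_num), hw8⟩, ⟨_, pow_ne_zero _ (by norm_num), hw9⟩, ⟨_, pow_ne_zero _ (by norm_num), hw10⟩, ⟨_, pow_ne_zero _ (by norm_num), hw11⟩, ⟨_, pow_ne_zero _ (by norm_num), hw12⟩,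 ⟨_, pow_ne_zero _ (by norm_num), hw13⟩, ⟨_, pow_ne_zero _ (by norm_num), hw14⟩, ⟨_, pow_ne_zero _ (by norm_num), hw15⟩]

abbrev Qt := MvP ⧸ JId

def mkA : MvP →ₐ[ℂ] Qt := Ideal.Quotient.mkₐ ℂ JId

def vq : Fin 16 → Qt := fun k => mkA (pol k)

def Smod : Submodule ℂ Qt := Submodule.span ℂ (Set.range vq)

lemma vq_mem (k : Fin 16) : mkA (pol k) ∈ Smod := Submodule.subset_span ⟨k, rfl⟩

lemma red (p q : MvP) (n m : ℂ) (hn : n ≠ 0) (a b : MvP)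
    (hid : a * fP + b * gP = C n * p + C m * q) (hq : mkA q ∈ Smod) : mkA p ∈ Smod := by
  have hmem : n • p + m • q ∈ JId := by
    rw [smul_eq_C_mul, smul_eq_C_mul, ← hid]
    exact Ideal.add_mem _
      (Ideal.mul_mem_left _ _ (Ideal.subset_span (Set.mem_insert _ _)))
      (Ideal.mul_mem_left _ _ (Ideal.subset_span (Set.mem_insert_of_mem _ rfl)))
  have h0 : n • mkA p + m • mkA q = 0 := by
    rw [← _root_.map_smul, ← _root_.map_smul, ← _root_.map_add]
    rw [show (mkA : MvP →ₐ[ℂ] Qt) (n • p + m • q) = Ideal.Quotient.mk JId (n • p + m • q) from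
      congrFun (Ideal.Quotient.mkₐ_eq_mk ℂ JId) _]
    exact Ideal.Quotient.eq_zero_iff_mem.mpr hmem
  have h1 : mkA p = n⁻¹ • ((-m) • mkA q) := by
    rw [neg_smul, ← eq_neg_of_add_eq_zero_left h0, inv_smul_smul₀ hn]
  rw [h1]
  exact Smod.smul_mem _ (Smod.smul_mem _ hq)

lemma relu0 : mkA (X 0 * pol 0) ∈ Smod := by
  rw [show (X 0 : MvP) * pol 0 = pol 11 by rw [polE0, polE11]; ring]
  exact vq_mem 11
lemma relu1 : mkA (X 0 * pol 1) ∈ Smod := by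
  rw [show (X 0 : MvP) * pol 1 = pol 12 by rw [polE1, polE12]; ring]
  exact vq_mem 12
lemma relu2 : mkA (X 0 * pol 2) ∈ Smod := by
  rw [show (X 0 : MvP) * pol 2 = pol 13 by rw [polE2, polE13]; ring]
  exact vq_mem 13
lemma relu3 : mkA (X 0 * pol 3) ∈ Smod := by
  refine red (X 0 * pol 3) (pol 7) 8 125 (by norm_num) (4 * X 1) (-10 * X 0 ^ 2 + 25 * X 1 ^ 3) ?_ (vq_mem 7)
  rw [polE3, polE7]
  simp only [fP, gP, map_ofNat, map_neg]
  ring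
lemma relu4 : mkA (X 0 * pol 4) ∈ Smod := by
  refine red (X 0 * pol 4) (pol 8) 8 125 (by norm_num) (4 * X 1 ^ 2) (-10 * X 0 ^ 2 * X 1 + 25 * X 1 ^ 4) ?_ (vq_mem 8)
  rw [polE4, polE8]
  simp only [fP, gP, map_ofNat, map_neg]
  ring
lemma relu5 : mkA (X 0 * pol 5) ∈ Smod := by
  refine red (X 0 * pol 5) (pol 9) 8 125 (by norm_num) (4 * X 1 ^ 3) (-10 * X 0 ^ 2 * X 1 ^ 2 + 25 * X 1 ^ 5) ?_ (vq_mem 9)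
  rw [polE5, polE9]
  simp only [fP, gP, map_ofNat, map_neg]
  ring
lemma relu6 : mkA (X 0 * pol 6) ∈ Smod := by
  refine red (X 0 * pol 6) (pol 10) 8 125 (by norm_num) (4 * X 1 ^ 4) (-10 * X 0 ^ 2 * X 1 ^ 3 + 25 * X 1 ^ 6) ?_ (vq_mem 10)
  rw [polE6, polE10]
  simp only [fP, gP, map_ofNat, map_neg]
  ring
lemma relu7 : mkA (X 0 * pol 7) ∈ Smod := by
  refine red (X 0 * pol 7) (pol 6) 125 (-20) (by norm_num) (4 * X 0 * X 1) (-10 * X 0 ^ 3 + 25 * X 0 * X 1 ^ 3 - 4 * X 1 ^ 2) ?_ (vq_mem 6)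
  rw [polE7, polE6]
  simp only [fP, gP, map_ofNat, map_neg]
  ring
lemma relu8 : mkA (X 0 * pol 8) ∈ Smod := by
  refine red (X 0 * pol 8) (pol 7) 125 (-20) (by norm_num) (4 * X 0 * X 1 ^ 2) (-10 * X 0 ^ 3 * X 1 + 25 * X 0 * X 1 ^ 4 - 4 * X 1 ^ 3) ?_ (vq_mem 7)
  rw [polE8, polE7]
  simp only [fP, gP, map_ofNat, map_neg]
  ring
lemma relu9 : mkA (X 0 * pol 9) ∈ Smod := by
  refine red (X 0 * pol 9) (pol 8) 125 (-20) (by norm_num) (4 * X 0 * X 1 ^ 3) (-10 * X 0 ^ 3 * X 1 ^ 2 + 25 * X 0 * X 1 ^ 5 - 4 * X 1 ^ 4) ?_ (vq_mem 8)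
  rw [polE9, polE8]
  simp only [fP, gP, map_ofNat, map_neg]
  ring
lemma relu10 : mkA (X 0 * pol 10) ∈ Smod := by
  refine red (X 0 * pol 10) (pol 9) 125 (-20) (by norm_num) (4 * X 0 * X 1 ^ 4) (-10 * X 0 ^ 3 * X 1 ^ 3 + 25 * X 0 * X 1 ^ 6 - 4 * X 1 ^ 5) ?_ (vq_mem 9)
  rw [polE10, polE9]
  simp only [fP, gP, map_ofNat, map_neg]
  ring
lemma relu11 : mkA (X 0 * pol 11) ∈ Smod := by
  rw [show (X 0 : MvP) * pol 11 = pol 14 by rw [polE11, polE14]; ring]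
  exact vq_mem 14
lemma relu12 : mkA (X 0 * pol 12) ∈ Smod := by
  refine red (X 0 * pol 12) (pol 4) 2 5 (by norm_num) (0) (1) ?_ (vq_mem 4)
  rw [polE12, polE4]
  simp only [fP, gP, map_ofNat, map_neg]
  ring
lemma relu13 : mkA (X 0 * pol 13) ∈ Smod := by
  refine red (X 0 * pol 13) (pol 5) 2 5 (by norm_num) (0) (X 1) ?_ (vq_mem 5)
  rw [polE13, polE5]
  simp only [fP, gP, map_ofNat, map_neg]
  ring
lemma relu14 : mkA (X 0 * pol 14) ∈ Smod := by
  rw [show (X 0 : MvP) * pol 14 = pol 15 by rw [polE14, polE15]; ring]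
  exact vq_mem 15
lemma relu15 : mkA (X 0 * pol 15) ∈ Smod := by
  refine red (X 0 * pol 15) (pol 13) 5 2 (by norm_num) (1) (0) ?_ (vq_mem 13)
  rw [polE15, polE13]
  simp only [fP, gP, map_ofNat, map_neg]
  ring
lemma relv0 : mkA (X 1 * pol 0) ∈ Smod := by
  rw [show (X 1 : MvP) * pol 0 = pol 1 by rw [polE0, polE1]; ring]
  exact vq_mem 1
lemma relv1 : mkA (X 1 * pol 1) ∈ Smod := by
  rw [show (X 1 : MvP) * pol 1 = pol 2 by rw [polE1, polE2]; ring]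
  exact vq_mem 2
lemma relv2 : mkA (X 1 * pol 2) ∈ Smod := by
  rw [show (X 1 : MvP) * pol 2 = pol 3 by rw [polE2, polE3]; ring]
  exact vq_mem 3
lemma relv3 : mkA (X 1 * pol 3) ∈ Smod := by
  rw [show (X 1 : MvP) * pol 3 = pol 4 by rw [polE3, polE4]; ring]
  exact vq_mem 4
lemma relv4 : mkA (X 1 * pol 4) ∈ Smod := by
  rw [show (X 1 : MvP) * pol 4 = pol 5 by rw [polE4, polE5]; ring]
  exact vq_mem 5
lemma relv5 : mkA (X 1 * pol 5) ∈ Smod := by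
  rw [show (X 1 : MvP) * pol 5 = pol 6 by rw [polE5, polE6]; ring]
  exact vq_mem 6
lemma relv6 : mkA (X 1 * pol 6) ∈ Smod := by
  rw [show (X 1 : MvP) * pol 6 = pol 7 by rw [polE6, polE7]; ring]
  exact vq_mem 7
lemma relv7 : mkA (X 1 * pol 7) ∈ Smod := by
  rw [show (X 1 : MvP) * pol 7 = pol 8 by rw [polE7, polE8]; ring]
  exact vq_mem 8
lemma relv8 : mkA (X 1 * pol 8) ∈ Smod := by
  rw [show (X 1 : MvP) * pol 8 = pol 9 by rw [polE8, polE9]; ring]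
  exact vq_mem 9
lemma relv9 : mkA (X 1 * pol 9) ∈ Smod := by
  rw [show (X 1 : MvP) * pol 9 = pol 10 by rw [polE9, polE10]; ring]
  exact vq_mem 10
lemma relv10 : mkA (X 1 * pol 10) ∈ Smod := by
  refine red (X 1 * pol 10) (pol 6) 15625 160 (by norm_num) (-32 * X 0 * X 1 + 500 * X 1 ^ 5) (80 * X 0 ^ 3 - 1250 * X 0 ^ 2 * X 1 ^ 4 - 200 * X 0 * X 1 ^ 3 + 3125 * X 1 ^ 7 + 32 * X 1 ^ 2) ?_ (vq_mem 6)
  rw [polE10, polE6]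
  simp only [fP, gP, map_ofNat, map_neg]
  ring
lemma relv11 : mkA (X 1 * pol 11) ∈ Smod := by
  rw [show (X 1 : MvP) * pol 11 = pol 12 by rw [polE11, polE12]; ring]
  exact vq_mem 12
lemma relv12 : mkA (X 1 * pol 12) ∈ Smod := by
  rw [show (X 1 : MvP) * pol 12 = pol 13 by rw [polE12, polE13]; ring]
  exact vq_mem 13
lemma relv13 : mkA (X 1 * pol 13) ∈ Smod := by
  refine red (X 1 * pol 13) (pol 7) 8 125 (by norm_num) (4 * X 1) (-10 * X 0 ^ 2 + 25 * X 1 ^ 3) ?_ (vq_mem 7)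
  rw [polE13, polE7]
  simp only [fP, gP, map_ofNat, map_neg]
  ring
lemma relv14 : mkA (X 1 * pol 14) ∈ Smod := by
  refine red (X 1 * pol 14) (pol 4) 2 5 (by norm_num) (0) (1) ?_ (vq_mem 4)
  rw [polE14, polE4]
  simp only [fP, gP, map_ofNat, map_neg]
  ring
lemma relv15 : mkA (X 1 * pol 15) ∈ Smod := by
  refine red (X 1 * pol 15) (pol 8) 16 (-625) (by norm_num) (-20 * X 1 ^ 2) (50 * X 0 ^ 2 * X 1 + 8 * X 0 - 125 * X 1 ^ 4) ?_ (vq_mem 8)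
  rw [polE15, polE8]
  simp only [fP, gP, map_ofNat, map_neg]
  ring

lemma mulX0_mem {z : Qt} (hz : z ∈ Smod) : mkA (X 0) * z ∈ Smod := by
  refine Submodule.span_induction ?_ ?_ ?_ ?_ hz
  · rintro _ ⟨k, rfl⟩
    simp only [vq, ← _root_.map_mul]
    fin_cases k
    exacts [relu0, relu1, relu2, relu3, relu4, relu5, relu6, relu7, relu8, relu9, relu10, relu11, relu12, relu13, relu14, relu15]
  · rw [mul_zero]; exact Smod.zero_mem
  · intro x y _ _ hx' hy'; rw [mul_add]; exact Smod.add_mem hx' hy'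
  · intro r x _ hx'; rw [mul_smul_comm]; exact Smod.smul_mem _ hx'

lemma mulX1_mem {z : Qt} (hz : z ∈ Smod) : mkA (X 1) * z ∈ Smod := by
  refine Submodule.span_induction ?_ ?_ ?_ ?_ hz
  · rintro _ ⟨k, rfl⟩
    simp only [vq, ← _root_.map_mul]
    fin_cases k
    exacts [relv0, relv1, relv2, relv3, relv4, relv5, relv6, relv7, relv8, relv9, relv10, relv11, relv12, relv13, relv14, relv15]
  · rw [mul_zero]; exact Smod.zero_mem
  · intro x y _ _ hx' hy'; rw [mul_add]; exact Smod.add_mem hx' hy'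
  · intro r x _ hx'; rw [mul_smul_comm]; exact Smod.smul_mem _ hx'

lemma mkA_mem_Smod (p : MvP) : mkA p ∈ Smod := by
  induction p using MvPolynomial.induction_on with
  | C a =>
      rw [show (C a : MvP) = a • pol 0 by rw [polE0]; simp [smul_eq_C_mul], _root_.map_smul]
      exact Smod.smul_mem _ (vq_mem 0)
  | add p q hp hq =>
      rw [_root_.map_add]; exact Smod.add_mem hp hq
  | mul_X p i hp =>
      rw [show p * X i = X i * p from mul_comm _ _, _root_.map_mul]
      fin_cases i
      · exact mulX0_mem hp
      · exact mulX1_mem hp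

lemma top_le_Smod : ⊤ ≤ Smod := fun z _ => by
  obtain ⟨p, rfl⟩ := Ideal.Quotient.mkₐ_surjective ℂ JId z
  exact mkA_mem_Smod p

lemma vq_li : LinearIndependent ℂ vq := by
  have hex := hw'
  choose c hc using hex
  have hli : LinearIndependent ℂ (fun k => c k • (Pi.single k 1 : Fin 16 → ℂ)) := by
    have h := ((Pi.basisFun ℂ (Fin 16)).unitsSMul
      (fun k => Units.mk0 (c k) (hc k).1)).linearIndependent
    have heq : ⇑((Pi.basisFun ℂ (Fin 16)).unitsSMul (fun k => Units.mk0 (c k) (hc k).1))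
        = fun k => c k • (Pi.single k 1 : Fin 16 → ℂ) := by
      funext k
      rw [Module.Basis.unitsSMul_apply, Pi.basisFun_apply]
      rfl
    rwa [heq] at h
  rw [Fintype.linearIndependent_iff]
  intro g hg
  have hP : mkA (∑ k, g k • pol k) = 0 := by
    rw [_root_.map_sum]
    simp only [_root_.map_smul]
    exact hg
  have hPJ : (∑ k, g k • pol k) ∈ JId := by
    rw [show (mkA : MvP →ₐ[ℂ] Qt) (∑ k, g k • pol k)
        = Ideal.Quotient.mk JId (∑ k, g k • pol k) from
      congrFun (Ideal.Quotient.mkₐ_eq_mk ℂ JId) _] at hP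
    exact Ideal.Quotient.eq_zero_iff_mem.mp hP
  have hL := Lmap_ker hPJ
  rw [_root_.map_sum] at hL
  simp only [_root_.map_smul] at hL
  have hL2 : ∑ k, g k • (c k • (Pi.single k 1 : Fin 16 → ℂ)) = 0 := by
    calc ∑ k, g k • (c k • (Pi.single k 1 : Fin 16 → ℂ))
        = ∑ k, g k • Lmap (pol k) := by
          refine Finset.sum_congr rfl fun k _ => ?_
          rw [(hc k).2]
      _ = 0 := hL
  exact fun i => Fintype.linearIndependent_iff.mp hli g hL2 i

lemma finrank_Qt : Module.finrank ℂ Qt = 16 := by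
  have b : Module.Basis (Fin 16) ℂ Qt := Module.Basis.mk vq_li top_le_Smod
  rw [Module.finrank_eq_card_basis b, Fintype.card_fin]

end

/-- The Milnor number of F(x,y) = x⁵ + y⁵ + x²y² equals 16. -/
theorem milnor_number_example :
    Module.finrank ℂ (MvPolynomial (Fin 2) ℂ ⧸
      (Ideal.span {pderiv 0 ((X 0 : MvPolynomial (Fin 2) ℂ) ^ 5 + X 1 ^ 5 + X 0 ^ 2 * X 1 ^ 2),
        pderiv 1 ((X 0 : MvPolynomial (Fin 2) ℂ) ^ 5 + X 1 ^ 5 + X 0 ^ 2 * X 1 ^ 2)} : Ideal (MvPolynomial (Fin 2) ℂ))) = 16 := by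
  have h0 : pderiv 0 ((X 0 : MvPolynomial (Fin 2) ℂ) ^ 5 + X 1 ^ 5 + X 0 ^ 2 * X 1 ^ 2) = fP := by
    simp only [fP]
    simp [pderiv_pow, pderiv_mul, pderiv_X_self, pderiv_X_of_ne, map_ofNat]
    ring
  have h1 : pderiv 1 ((X 0 : MvPolynomial (Fin 2) ℂ) ^ 5 + X 1 ^ 5 + X 0 ^ 2 * X 1 ^ 2) = gP := by
    simp only [gP]
    simp [pderiv_pow, pderiv_mul, pderiv_X_self, pderiv_X_of_ne, map_ofNat]
    ring
  rw [h0, h1]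
  exact finrank_Qt

end MilnorAux
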